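/- For every odd N ≥ 1, the sandpile group G_{Γ_N} on an N×N square domain Γ_N ⊂ ℤ² contains a cyclic subgroup of order (N+1)/2. -/

import Mathlib

/-- Two vertices of `ℤ²` are adjacent iff their Euclidean distance is `1`. -/
def adj (u v : ℤ × ℤ) : Prop := (u.1 - v.1) ^ 2 + (u.2 - v.2) ^ 2 = 1

instance : DecidableRel adj := fun u v => by unfold adj; infer_instance

/-- The reduced Laplacian of a finite domain `Γ ⊂ ℤ²`. -/
def lap {R : Type*} [CommRing R] (Γ : Finset (ℤ × ℤ)) (f : ↥Γ → R) : ↥Γ → R :=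
  fun v => (∑ w ∈ Γ.attach.filter (fun w => adj w.1 v.1), f w) - 4 * f v

lemma lap_add {R : Type*} [CommRing R] (Γ : Finset (ℤ × ℤ)) (f g : ↥Γ → R) :
    lap Γ (f + g) = lap Γ f + lap Γ g := by
  funext v; simp [lap, Finset.sum_add_distrib]; ring

lemma lap_neg {R : Type*} [CommRing R] (Γ : Finset (ℤ × ℤ)) (f : ↥Γ → R) :
    lap Γ (-f) = -(lap Γ f) := by
  funext v; simp [lap]; ring

lemma lap_smul {R : Type*} [CommRing R] (Γ : Finset (ℤ × ℤ)) (c : R) (f : ↥Γ → R) :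
    lap Γ (c • f) = c • lap Γ f := by
  funext v
  simp only [lap, Pi.smul_apply, smul_eq_mul, mul_sub, Finset.mul_sum]
  ring

lemma lap_zero {R : Type*} [CommRing R] (Γ : Finset (ℤ × ℤ)) :
    lap Γ (0 : ↥Γ → R) = 0 := by
  funext v; simp [lap]

/-- The boundary `∂Γ`: vertices of `Γ` adjacent to some vertex of `ℤ² \ Γ`. -/
noncomputable def boundary (Γ : Finset (ℤ × ℤ)) : Finset (ℤ × ℤ) :=
  @Finset.filter _ (fun v => ∃ w : ℤ × ℤ, w ∉ Γ ∧ adj w v) (Classical.decPred _) Γ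

lemma boundary_subset (Γ : Finset (ℤ × ℤ)) : boundary Γ ⊆ Γ :=
  @Finset.filter_subset _ (fun v => ∃ w : ℤ × ℤ, w ∉ Γ ∧ adj w v) (Classical.decPred _) Γ

/-- A function on `Γ` is harmonic if its Laplacian vanishes on the interior `Γ \ ∂Γ`. -/
def Harmonic {R : Type*} [CommRing R] (Γ : Finset (ℤ × ℤ)) (f : ↥Γ → R) : Prop :=
  ∀ v : ↥Γ, (v : ℤ × ℤ) ∉ boundary Γ → lap Γ f v = 0

/-- `Γ ⊂ ℤ²` is a convex domain if it is the set of lattice points of a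
convex open subset of `ℝ²`. -/
def IsConvexDomain (Γ : Finset (ℤ × ℤ)) : Prop :=
  ∃ P : Set (ℝ × ℝ), Convex ℝ P ∧ IsOpen P ∧
    ∀ v : ℤ × ℤ, v ∈ Γ ↔ ((v.1 : ℝ), (v.2 : ℝ)) ∈ P

/-- The reduced Laplacian as an additive group homomorphism on `ℤ^Γ`. -/
def lapHom (Γ : Finset (ℤ × ℤ)) : (↥Γ → ℤ) →+ (↥Γ → ℤ) where
  toFun := lap Γ
  map_zero' := lap_zero Γ
  map_add' := lap_add Γ

/-- The sandpile group `G_Γ = ℤ^Γ / Δ_Γ(ℤ^Γ)`. -/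
def SandpileGroup (Γ : Finset (ℤ × ℤ)) : Type :=
  (↥Γ → ℤ) ⧸ (lapHom Γ).range

instance (Γ : Finset (ℤ × ℤ)) : AddCommGroup (SandpileGroup Γ) :=
  inferInstanceAs (AddCommGroup ((↥Γ → ℤ) ⧸ (lapHom Γ).range))

/-- The canonical projection `ℤ^Γ → G_Γ`. -/
def sandMk (Γ : Finset (ℤ × ℤ)) : (↥Γ → ℤ) →+ SandpileGroup Γ :=
  QuotientAddGroup.mk' _

/-- The `N×N` square domain `Γ_N = {1, …, N} × {1, …, N} ⊂ ℤ²`. -/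
noncomputable def squareDomain (N : ℕ) : Finset (ℤ × ℤ) :=
  Finset.Icc 1 (N : ℤ) ×ˢ Finset.Icc 1 (N : ℤ)

section Aux

open Finset

lemma adj_comm' (u v : ℤ × ℤ) : adj u v ↔ adj v u := by
  unfold adj; constructor <;> intro h <;> linear_combination h

/-- The four lattice neighbours of `v`. -/
def nbrs (v : ℤ × ℤ) : Finset (ℤ × ℤ) :=
  {(v.1 - 1, v.2), (v.1 + 1, v.2), (v.1, v.2 - 1), (v.1, v.2 + 1)}

lemma adj_iff_mem_nbrs (w v : ℤ × ℤ) : adj w v ↔ w ∈ nbrs v := by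
  unfold adj nbrs
  simp only [mem_insert, mem_singleton, Prod.ext_iff]
  constructor
  · intro h
    obtain ⟨a, ha⟩ : ∃ a, w.1 - v.1 = a := ⟨_, rfl⟩
    obtain ⟨b, hb⟩ : ∃ b, w.2 - v.2 = b := ⟨_, rfl⟩
    rw [ha, hb] at h
    have ha1 : -1 ≤ a := by nlinarith [sq_nonneg b]
    have ha2 : a ≤ 1 := by nlinarith [sq_nonneg b]
    have hb1 : -1 ≤ b := by nlinarith [sq_nonneg a]
    have hb2 : b ≤ 1 := by nlinarith [sq_nonneg a]
    interval_cases a <;> interval_cases b <;> simp_all <;> omega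
  · rintro (⟨h1, h2⟩ | ⟨h1, h2⟩ | ⟨h1, h2⟩ | ⟨h1, h2⟩) <;> rw [h1, h2] <;> ring

lemma sum_nbrs {R : Type*} [AddCommMonoid R] (F : ℤ × ℤ → R) (v : ℤ × ℤ) :
    ∑ w ∈ nbrs v, F w =
      F (v.1 - 1, v.2) + F (v.1 + 1, v.2) + F (v.1, v.2 - 1) + F (v.1, v.2 + 1) := by
  have h1 : ((v.1 - 1, v.2) : ℤ × ℤ) ∉
      ({(v.1 + 1, v.2), (v.1, v.2 - 1), (v.1, v.2 + 1)} : Finset (ℤ × ℤ)) := by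
    simp [Prod.ext_iff] <;> omega
  have h2 : ((v.1 + 1, v.2) : ℤ × ℤ) ∉
      ({(v.1, v.2 - 1), (v.1, v.2 + 1)} : Finset (ℤ × ℤ)) := by
    simp [Prod.ext_iff] <;> omega
  have h3 : ((v.1, v.2 - 1) : ℤ × ℤ) ∉ ({(v.1, v.2 + 1)} : Finset (ℤ × ℤ)) := by
    simp [Prod.ext_iff] <;> omega
  rw [nbrs, Finset.sum_insert h1, Finset.sum_insert h2, Finset.sum_insert h3,
    Finset.sum_singleton]
  abel

lemma filter_sum {R : Type*} [AddCommMonoid R] (Γ : Finset (ℤ × ℤ)) (F : ℤ × ℤ → R)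
    (v : ℤ × ℤ) (hF : ∀ w ∈ nbrs v, w ∉ Γ → F w = 0) :
    ∑ w ∈ Γ.attach.filter (fun w => adj w.1 v), F w.1 = ∑ w ∈ nbrs v, F w := by
  rw [Finset.sum_filter, Finset.sum_attach Γ (fun w => if adj w v then F w else 0),
    ← Finset.sum_filter]
  have hset : Γ.filter (fun w => adj w v) = (nbrs v).filter (fun w => w ∈ Γ) := by
    ext w
    simp only [Finset.mem_filter, adj_iff_mem_nbrs]
    tauto
  rw [hset, Finset.sum_filter]
  refine Finset.sum_congr rfl fun w hw => ?_
  by_cases h : w ∈ Γ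
  · simp [h]
  · simp [h, hF w hw h]

lemma mem_squareDomain {N : ℕ} {w : ℤ × ℤ} :
    w ∈ squareDomain N ↔ 1 ≤ w.1 ∧ w.1 ≤ N ∧ 1 ≤ w.2 ∧ w.2 ≤ N := by
  simp [squareDomain, Finset.mem_product, Finset.mem_Icc, and_assoc]

/-- The test function `h(x,y) = x y` with values in `ZMod m`. -/
def Cf (m : ℕ) (w : ℤ × ℤ) : ZMod m := ((w.1 * w.2 : ℤ) : ZMod m)

lemma nbr_sum_C {N m : ℕ} (hm : N + 1 = 2 * m) (v : ℤ × ℤ) (hv : v ∈ squareDomain N) :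
    ∑ w ∈ (squareDomain N).attach.filter (fun w => adj w.1 v), Cf m w.1 = 4 * Cf m v := by
  rw [mem_squareDomain] at hv
  rw [filter_sum (squareDomain N) (Cf m) v ?vanish]
  · rw [sum_nbrs]
    unfold Cf
    push_cast
    ring
  case vanish =>
    intro w hw hwn
    rw [mem_squareDomain] at hwn
    have hmz : (N : ℤ) + 1 = 2 * (m : ℤ) := by exact_mod_cast hm
    simp only [nbrs, mem_insert, mem_singleton] at hw
    rcases hw with h | h | h | h <;> subst h <;> unfold Cf <;> simp only
    · have : v.1 - 1 = 0 := by omega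
      rw [this]; simp
    · have : v.1 + 1 = 2 * (m : ℤ) := by omega
      rw [this]; push_cast; simp [ZMod.natCast_self]
    · have : v.2 - 1 = 0 := by omega
      rw [this]; simp
    · have : v.2 + 1 = 2 * (m : ℤ) := by omega
      rw [this]; push_cast; simp [ZMod.natCast_self]

/-- The functional `f ↦ ∑ v, v.1 v.2 f(v)` mod `m`. -/
def phi (Γ : Finset (ℤ × ℤ)) (m : ℕ) : (↥Γ → ℤ) →+ ZMod m where
  toFun f := ∑ v ∈ Γ.attach, Cf m v.1 * ((f v : ℤ) : ZMod m)
  map_zero' := by simp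
  map_add' f g := by
    simp only [Pi.add_apply, Int.cast_add, mul_add]
    rw [Finset.sum_add_distrib]

lemma phi_apply (Γ : Finset (ℤ × ℤ)) (m : ℕ) (f : ↥Γ → ℤ) :
    phi Γ m f = ∑ v ∈ Γ.attach, Cf m v.1 * ((f v : ℤ) : ZMod m) := rfl

lemma phi_lap {N m : ℕ} (hm : N + 1 = 2 * m) (f : ↥(squareDomain N) → ℤ) :
    phi (squareDomain N) m (lap (squareDomain N) f) = 0 := by
  rw [phi_apply]
  have expand : ∀ v : ↥(squareDomain N),
      Cf m v.1 * ((lap (squareDomain N) f v : ℤ) : ZMod m)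
      = (∑ w ∈ (squareDomain N).attach.filter (fun w => adj w.1 v.1),
          Cf m v.1 * ((f w : ℤ) : ZMod m))
        - 4 * (Cf m v.1 * ((f v : ℤ) : ZMod m)) := by
    intro v
    rw [lap]
    push_cast
    rw [mul_sub, Finset.mul_sum]
    ring
  rw [Finset.sum_congr rfl fun v _ => expand v, Finset.sum_sub_distrib]
  have swap : ∑ v ∈ (squareDomain N).attach,
        ∑ w ∈ (squareDomain N).attach.filter (fun w => adj w.1 v.1),
        Cf m v.1 * ((f w : ℤ) : ZMod m)
      = ∑ w ∈ (squareDomain N).attach,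
          (∑ v ∈ (squareDomain N).attach.filter (fun v => adj v.1 w.1), Cf m v.1)
          * ((f w : ℤ) : ZMod m) := by
    simp only [Finset.sum_filter]
    rw [Finset.sum_comm]
    refine Finset.sum_congr rfl fun w _ => ?_
    rw [Finset.sum_mul]
    refine Finset.sum_congr rfl fun v _ => ?_
    by_cases h : adj w.1 v.1
    · rw [if_pos h, if_pos ((adj_comm' _ _).mp h)]
    · rw [if_neg h, if_neg (fun hh => h ((adj_comm' _ _).mp hh)), zero_mul]
  rw [swap]
  rw [Finset.sum_congr rfl fun w _ => by rw [nbr_sum_C hm w.1 w.2]]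
  rw [sub_eq_zero]
  exact Finset.sum_congr rfl fun w _ => by ring

/-- Extension of a function on `Γ` to `ℤ²` by zero. -/
noncomputable def extQ (Γ : Finset (ℤ × ℤ)) (f : ↥Γ → ℚ) (w : ℤ × ℤ) : ℚ :=
  if h : w ∈ Γ then f ⟨w, h⟩ else 0

lemma lap_nonpos {Γ : Finset (ℤ × ℤ)} {f : ↥Γ → ℚ} (hf : lap Γ f = 0) (v : ↥Γ) :
    f v ≤ 0 := by
  by_contra hcon
  push_neg at hcon
  have hattne : Γ.attach.Nonempty := ⟨v, Finset.mem_attach _ _⟩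
  obtain ⟨u0, _, hu0⟩ := Finset.exists_max_image Γ.attach (fun w => f w) hattne
  have hM : 0 < f u0 := lt_of_lt_of_le hcon (hu0 v (Finset.mem_attach _ _))
  set s' := Γ.attach.filter (fun w => f w = f u0) with hs'
  obtain ⟨u, humem, hux⟩ := Finset.exists_max_image s' (fun w => (w : ℤ × ℤ).1) 
    ⟨u0, Finset.mem_filter.mpr ⟨Finset.mem_attach _ _, rfl⟩⟩
  have hfu : f u = f u0 := (Finset.mem_filter.mp humem).2
  have h0 : lap Γ f u = 0 := by rw [hf]; rfl
  rw [lap] at h0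
  have hrw : ∑ w ∈ Γ.attach.filter (fun w => adj w.1 u.1), f w
      = ∑ w ∈ nbrs u.1, extQ Γ f w := by
    rw [← filter_sum Γ (extQ Γ f) u.1 (fun w _ hw => dif_neg hw)]
    exact Finset.sum_congr rfl fun w _ => by unfold extQ; rw [dif_pos w.2]
  rw [hrw, sum_nbrs] at h0
  have hb : ∀ w, extQ Γ f w ≤ f u0 := by
    intro w
    unfold extQ
    split
    · exact hu0 _ (Finset.mem_attach _ _)
    · exact le_of_lt hM
  have hstrict : extQ Γ f ((u : ℤ × ℤ).1 + 1, (u : ℤ × ℤ).2) < f u0 := by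
    by_cases hmem : ((u : ℤ × ℤ).1 + 1, (u : ℤ × ℤ).2) ∈ Γ
    · rw [extQ, dif_pos hmem]
      rcases lt_or_eq_of_le (hu0 ⟨_, hmem⟩ (Finset.mem_attach _ _)) with h | h
      · exact h
      · exfalso
        have : (⟨((u : ℤ × ℤ).1 + 1, (u : ℤ × ℤ).2), hmem⟩ : ↥Γ) ∈ s' :=
          Finset.mem_filter.mpr ⟨Finset.mem_attach _ _, h⟩
        have := hux _ this
        simp only at this
        omega
    · rw [extQ, dif_neg hmem]
      exact hM
  have hb1 := hb ((u : ℤ × ℤ).1 - 1, (u : ℤ × ℤ).2)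
  have hb3 := hb ((u : ℤ × ℤ).1, (u : ℤ × ℤ).2 - 1)
  have hb4 := hb ((u : ℤ × ℤ).1, (u : ℤ × ℤ).2 + 1)
  linarith

lemma lap_injQ {Γ : Finset (ℤ × ℤ)} {f : ↥Γ → ℚ} (hf : lap Γ f = 0) : f = 0 := by
  funext v
  have h1 := lap_nonpos hf v
  have h2 : (-f) v ≤ 0 := lap_nonpos (f := -f) (by rw [lap_neg, hf, neg_zero]) v
  simp only [Pi.neg_apply, neg_nonpos] at h2
  simpa using le_antisymm h1 h2

/-- The Laplacian as a `ℚ`-linear map. -/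
def lapLin (Γ : Finset (ℤ × ℤ)) : (↥Γ → ℚ) →ₗ[ℚ] (↥Γ → ℚ) where
  toFun := lap Γ
  map_add' := lap_add Γ
  map_smul' c f := lap_smul Γ c f

lemma exists_nsmul_mem_range (Γ : Finset (ℤ × ℤ)) (x : ↥Γ → ℤ) :
    ∃ n : ℕ, 0 < n ∧ ∃ g : ↥Γ → ℤ, lap Γ g = (n : ℤ) • x := by
  have hinj : Function.Injective (lapLin Γ) := by
    rw [← LinearMap.ker_eq_bot, LinearMap.ker_eq_bot']
    intro f hf
    exact lap_injQ hf
  have hsurj : Function.Surjective (lapLin Γ) :=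
    (LinearMap.injective_iff_surjective).mp hinj
  obtain ⟨y, hy⟩ := hsurj (fun v => (x v : ℚ))
  set d : ℕ := ∏ v ∈ Finset.univ, (y v).den with hd
  have hdpos : 0 < d := Finset.prod_pos fun v _ => (y v).pos
  set g : ↥Γ → ℤ := fun v => ((d / (y v).den : ℕ) : ℤ) * (y v).num with hg
  have hgy : ∀ v, (g v : ℚ) = (d : ℚ) * y v := by
    intro v
    have hdvd : (y v).den ∣ d := Finset.dvd_prod_of_mem _ (Finset.mem_univ v)
    have hden0 : ((y v).den : ℚ) ≠ 0 := by
      exact_mod_cast (Nat.cast_pos.mpr (y v).pos).ne'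
    have hnum : ((y v).num : ℚ) = y v * ((y v).den : ℚ) :=
      (div_eq_iff hden0).mp (Rat.num_div_den (y v))
    have hcast : (g v : ℚ) = ((d / (y v).den : ℕ) : ℚ) * ((y v).num : ℚ) := by
      simp only [hg, Int.cast_mul, Int.cast_natCast]
    have hdd : ((d / (y v).den : ℕ) : ℚ) * ((y v).den : ℚ) = (d : ℚ) := by
      rw [← Nat.cast_mul, Nat.div_mul_cancel hdvd]
    rw [hcast, hnum, ← mul_assoc, mul_comm (((d / (y v).den : ℕ) : ℚ)) (y v),
      mul_assoc, hdd]
    ring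
  refine ⟨d, hdpos, g, ?_⟩
  funext v
  have : ((lap Γ g v : ℤ) : ℚ) = (((d : ℤ) • x) v : ℚ) := by
    have hcast : ((lap Γ g v : ℤ) : ℚ) = lap Γ (fun w => ((g w : ℤ) : ℚ)) v := by
      rw [lap, lap]
      push_cast
      ring
    rw [hcast]
    have : (fun w => ((g w : ℤ) : ℚ)) = (d : ℚ) • y := by
      funext w; rw [hgy w]; rfl
    rw [this, lap_smul]
    have hyv : lap Γ y v = (x v : ℚ) := congrFun hy v
    simp only [Pi.smul_apply, smul_eq_mul, hyv, Pi.smul_apply]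
    push_cast
    ring
  exact_mod_cast this

end Aux

/-- For every odd `N ≥ 1`, the sandpile group on the `N×N`
square domain contains a cyclic subgroup of order `(N+1)/2`. -/
theorem square_has_cyclic_subgroup_odd (N : ℕ) (hN : 1 ≤ N) (hodd : Odd N) :
    ∃ S : AddSubgroup (SandpileGroup (squareDomain N)),
      IsAddCyclic ↥S ∧ Nat.card ↥S = (N + 1) / 2 := by
  obtain ⟨k, hk⟩ := hodd
  set m : ℕ := (N + 1) / 2 with hmdef
  have hm : N + 1 = 2 * m := by omega
  have hmpos : 0 < m := by omega
  set Γ := squareDomain N with hΓ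
  have h11 : ((1, 1) : ℤ × ℤ) ∈ Γ := by
    rw [hΓ, mem_squareDomain]
    have : (1 : ℤ) ≤ (N : ℤ) := by exact_mod_cast hN
    simp only
    omega
  classical
  set δ : ↥Γ → ℤ := fun w => if w = ⟨(1, 1), h11⟩ then 1 else 0 with hδ
  -- the functional φ descends to the sandpile group
  have hker : ∀ x ∈ (lapHom Γ).range, phi Γ m x = 0 := by
    rintro x ⟨g, rfl⟩
    exact phi_lap hm g
  set φbar : SandpileGroup Γ →+ ZMod m :=
    QuotientAddGroup.lift (lapHom Γ).range (phi Γ m) hker with hφbar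
  have hφδ : phi Γ m δ = 1 := by
    rw [phi_apply]
    rw [Finset.sum_eq_single (⟨((1, 1) : ℤ × ℤ), h11⟩ : ↥Γ)]
    · simp [hδ, Cf]
    · intro b _ hb
      simp only [hδ]
      rw [if_neg hb, Int.cast_zero, mul_zero]
    · intro hmem
      exact absurd (Finset.mem_attach _ _) hmem
  set X : SandpileGroup Γ := sandMk Γ δ with hX
  have hφX : φbar X = 1 := by
    rw [hX, hφbar]
    exact hφδ
  -- X has finite order
  have hfin : IsOfFinAddOrder X := by
    rw [isOfFinAddOrder_iff_nsmul_eq_zero]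
    obtain ⟨n, hnpos, g, hg⟩ := exists_nsmul_mem_range Γ δ
    refine ⟨n, hnpos, ?_⟩
    rw [hX, ← map_nsmul]
    have hmem : (n • δ) ∈ (lapHom Γ).range := ⟨g, by rw [natCast_zsmul] at hg; exact hg⟩
    exact (QuotientAddGroup.eq_zero_iff (n • δ)).mpr hmem
  set n := addOrderOf X with hn
  have hnpos : 0 < n := hfin.addOrderOf_pos
  have hmn : m ∣ n := by
    have h1 : φbar (n • X) = 0 := by
      rw [hn, addOrderOf_nsmul_eq_zero, map_zero]
    rw [map_nsmul, hφX] at h1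
    have h2 : ((n : ℕ) : ZMod m) = 0 := by
      rw [← h1]
      simp [nsmul_eq_mul]
    exact (ZMod.natCast_eq_zero_iff n m).mp h2
  have hq : n / m ≠ 0 := by
    have := Nat.div_pos (Nat.le_of_dvd hnpos hmn) hmpos
    omega
  set Y : SandpileGroup Γ := (n / m) • X with hY
  have hordY : addOrderOf Y = m := by
    rw [hY, addOrderOf_nsmul' X hq, ← hn]
    rw [Nat.gcd_eq_right (Nat.div_dvd_of_dvd hmn)]
    exact Nat.div_div_self hmn hnpos.ne'
  refine ⟨AddSubgroup.zmultiples Y, ?_, ?_⟩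
  · refine ⟨⟨Y, AddSubgroup.mem_zmultiples Y⟩, fun x => ?_⟩
    obtain ⟨j, hj⟩ := AddSubgroup.mem_zmultiples_iff.mp x.2
    exact AddSubgroup.mem_zmultiples_iff.mpr ⟨j, Subtype.ext (by
      rw [← hj]
      exact rfl)⟩
  · rw [Nat.card_zmultiples, hordY]
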